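/- Let K : ℝ → ℝ be a kernel supported on [-1,1], let X ⊆ ℝ and x ∈ X, and define the transformation H(g)(u) = ∫_{(X-x)/h} 1(v ≥ u) K(v) g(v) dv. If g₁, g₂ are bounded measurable functions on (X-x)/h and at least one of ∫_{(X-x)/h} K(u) g₁(u) du, ∫_{(X-x)/h} K(u) g₂(u) du equals zero, then ∫_{((X-x)/h) ∩ [-1,1]} H(g₁)(u) H(g₂)(u) du = ∬_{(X-x)/h × (X-x)/h} K(u) K(v) g₁(u) g₂(v) (u ∧ v) du dv. -/

import Mathlib

open MeasureTheory Set

lemma intOn_aux {s : Set ℝ} (hs : MeasurableSet s) (hfin : volume s < ⊤)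
    {f : ℝ → ℝ} (hf : AEStronglyMeasurable f (volume.restrict s)) {C : ℝ}
    (hb : ∀ y ∈ s, |f y| ≤ C) : IntegrableOn f s := by
  haveI : IsFiniteMeasure (volume.restrict s) :=
    ⟨by rwa [Measure.restrict_apply_univ]⟩
  refine Integrable.mono' (integrable_const C) hf ?_
  filter_upwards [ae_restrict_mem hs] with y hy
  simpa [Real.norm_eq_abs] using hb y hy

lemma intProd_aux {s t : Set ℝ} (hs : MeasurableSet s) (ht : MeasurableSet t)
    (hfs : volume s < ⊤) (hft : volume t < ⊤)
    {f : ℝ × ℝ → ℝ}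
    (hf : AEStronglyMeasurable f ((volume.restrict s).prod (volume.restrict t))) {C : ℝ}
    (hb : ∀ p : ℝ × ℝ, p.1 ∈ s → p.2 ∈ t → |f p| ≤ C) :
    Integrable f ((volume.restrict s).prod (volume.restrict t)) := by
  haveI : IsFiniteMeasure (volume.restrict s) := ⟨by rwa [Measure.restrict_apply_univ]⟩
  haveI : IsFiniteMeasure (volume.restrict t) := ⟨by rwa [Measure.restrict_apply_univ]⟩
  refine Integrable.mono' (integrable_const C) hf ?_
  rw [Measure.prod_restrict]
  filter_upwards [ae_restrict_mem (hs.prod ht)] with p hp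
  simpa [Real.norm_eq_abs] using hb p hp.1 hp.2

lemma ind_int_aux (c d m : ℝ) (hcm : c ≤ m) (hmd : m ≤ d) :
    ∫ u in Icc c d, (if u ≤ m then (1:ℝ) else 0) = m - c := by
  have h1 : ∀ u : ℝ, (if u ≤ m then (1:ℝ) else 0) = (Iic m).indicator (fun _ => (1:ℝ)) u := by
    intro u; simp [indicator_apply, mem_Iic]
  simp_rw [h1]
  rw [setIntegral_indicator measurableSet_Iic]
  have h2 : Icc c d ∩ Iic m = Icc c m := by
    ext w
    simp only [mem_inter_iff, mem_Icc, mem_Iic]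
    constructor
    · rintro ⟨⟨h3, h4⟩, h5⟩; exact ⟨h3, h5⟩
    · rintro ⟨h3, h5⟩; exact ⟨⟨h3, h5.trans hmd⟩, h5⟩
  rw [h2]
  simp [Real.volume_Icc, ENNReal.toReal_ofReal (sub_nonneg.mpr hcm), hcm]

/-- H-transformation identity (Lemma SA-1(i)): for bounded measurable `g₁, g₂` on
`S = (X - x)/h` with at least one of `∫ K g₁`, `∫ K g₂` equal to zero,
`∫_{S ∩ [-1,1]} H(g₁) H(g₂) = ∬_{S×S} K(u) K(v) g₁(u) g₂(v) min(u,v)`. -/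
theorem stmt0 (lo hi x h : ℝ) (hx : x ∈ Icc lo hi) (hh : 0 < h)
    (K g₁ g₂ : ℝ → ℝ)
    (hK0 : ∀ u, 0 ≤ K u) (hKcont : Continuous K)
    (hKsupp : ∀ u, u ∉ Icc (-1 : ℝ) 1 → K u = 0)
    (S : Set ℝ) (hS : S = (fun t => (t - x) / h) '' Icc lo hi)
    (hg₁m : Measurable g₁) (hg₂m : Measurable g₂)
    (hg₁b : ∃ M, ∀ u ∈ S, |g₁ u| ≤ M) (hg₂b : ∃ M, ∀ u ∈ S, |g₂ u| ≤ M)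
    (H : (ℝ → ℝ) → ℝ → ℝ)
    (hH : ∀ g u, H g u = ∫ v in S, (if u ≤ v then (1 : ℝ) else 0) * K v * g v)
    (hzero : (∫ u in S, K u * g₁ u) = 0 ∨ (∫ u in S, K u * g₂ u) = 0) :
    (∫ u in S ∩ Icc (-1 : ℝ) 1, H g₁ u * H g₂ u)
      = ∫ u in S, ∫ v in S, K u * K v * g₁ u * g₂ v * min u v := by
  obtain ⟨M₁', hM₁'⟩ := hg₁b
  obtain ⟨M₂', hM₂'⟩ := hg₂b
  set M₁ := max M₁' 0 with hM₁def
  set M₂ := max M₂' 0 with hM₂def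
  have hM₁0 : 0 ≤ M₁ := le_max_right _ _
  have hM₂0 : 0 ≤ M₂ := le_max_right _ _
  have hM₁ : ∀ u ∈ S, |g₁ u| ≤ M₁ := fun u hu => (hM₁' u hu).trans (le_max_left _ _)
  have hM₂ : ∀ u ∈ S, |g₂ u| ≤ M₂ := fun u hu => (hM₂' u hu).trans (le_max_left _ _)
  set a := (lo - x) / h with hadef
  set b := (hi - x) / h with hbdef
  have hS' : S = Icc a b := by
    rw [hS]; ext u
    simp only [mem_image, mem_Icc]
    constructor
    · rintro ⟨t, ⟨h1, h2⟩, rfl⟩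
      constructor
      · rw [hadef]; gcongr
      · rw [hbdef]; gcongr
    · rintro ⟨h1, h2⟩
      refine ⟨u * h + x, ⟨?_, ?_⟩, by field_simp; ring⟩
      · have := (div_le_iff₀ hh).mp h1
        linarith
      · have := (le_div_iff₀ hh).mp h2
        linarith
  set c := a ⊔ (-1 : ℝ) with hcdef
  set d := b ⊓ (1 : ℝ) with hddef
  have hT : S ∩ Icc (-1:ℝ) 1 = Icc c d := by rw [hS', Icc_inter_Icc]
  have hSm : MeasurableSet S := hS' ▸ measurableSet_Icc
  have hSfin : volume S < ⊤ := by rw [hS', Real.volume_Icc]; exact ENNReal.ofReal_lt_top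
  have hTm : MeasurableSet (Icc c d) := measurableSet_Icc
  have hTfin : volume (Icc c d) < ⊤ := by rw [Real.volume_Icc]; exact ENNReal.ofReal_lt_top
  haveI hFS : IsFiniteMeasure (volume.restrict S) := ⟨by rwa [Measure.restrict_apply_univ]⟩
  -- kernel bound
  have hKcs : HasCompactSupport K := HasCompactSupport.intro isCompact_Icc hKsupp
  obtain ⟨u₀, hu₀⟩ := hKcont.exists_forall_ge_of_hasCompactSupport hKcs
  set CK := K u₀ with hCKdef
  have hCK0 : 0 ≤ CK := hK0 u₀
  have hCK : ∀ u, |K u| ≤ CK := fun u => by rw [abs_of_nonneg (hK0 u)]; exact hu₀ u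
  -- measurability infrastructure
  have hKm : Measurable K := hKcont.measurable
  have mind : Measurable (fun p : ℝ × ℝ => if p.1 ≤ p.2 then (1:ℝ) else 0) :=
    Measurable.ite (measurableSet_le measurable_fst measurable_snd) measurable_const
      measurable_const
  have mF₁ : Measurable (fun p : ℝ × ℝ => (if p.1 ≤ p.2 then (1:ℝ) else 0) * K p.2 * g₁ p.2) :=
    (mind.mul (hKm.comp measurable_snd)).mul (hg₁m.comp measurable_snd)
  have mF₂ : Measurable (fun p : ℝ × ℝ => (if p.1 ≤ p.2 then (1:ℝ) else 0) * K p.2 * g₂ p.2) :=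
    (mind.mul (hKm.comp measurable_snd)).mul (hg₂m.comp measurable_snd)
  -- bounds on integrands
  have hF₁b : ∀ u s, s ∈ S → |(if u ≤ s then (1:ℝ) else 0) * K s * g₁ s| ≤ CK * M₁ := by
    intro u s hs
    rw [abs_mul, abs_mul]
    have h1 : |if u ≤ s then (1:ℝ) else 0| ≤ 1 := by split <;> simp
    calc |if u ≤ s then (1:ℝ) else 0| * |K s| * |g₁ s| ≤ 1 * CK * M₁ := by
          gcongr <;> [exact hCK s; exact hM₁ s hs]
      _ = CK * M₁ := by ring
  have hF₂b : ∀ u s, s ∈ S → |(if u ≤ s then (1:ℝ) else 0) * K s * g₂ s| ≤ CK * M₂ := by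
    intro u s hs
    rw [abs_mul, abs_mul]
    have h1 : |if u ≤ s then (1:ℝ) else 0| ≤ 1 := by split <;> simp
    calc |if u ≤ s then (1:ℝ) else 0| * |K s| * |g₂ s| ≤ 1 * CK * M₂ := by
          gcongr <;> [exact hCK s; exact hM₂ s hs]
      _ = CK * M₂ := by ring
  have hF₁b' : ∀ u s : ℝ, |(if u ≤ s then (1:ℝ) else 0) * K s * g₁ s| ≤ |K s * g₁ s| := by
    intro u s
    split
    · simp [abs_mul, mul_assoc]
    · simp [abs_nonneg]; positivity
  -- expand the product of the two H's
  have key1 : ∀ u, H g₁ u * H g₂ u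
      = ∫ s in S, ∫ t in S, ((if u ≤ s then (1:ℝ) else 0) * K s * g₁ s)
          * ((if u ≤ t then (1:ℝ) else 0) * K t * g₂ t) := by
    intro u
    rw [hH, hH, ← integral_mul_const]
    exact integral_congr_ae (Filter.Eventually.of_forall fun s => (integral_const_mul _ _).symm)
  -- Fubini pieces
  have hInt1 : Integrable (Function.uncurry fun u s =>
      ∫ t in S, ((if u ≤ s then (1:ℝ) else 0) * K s * g₁ s)
        * ((if u ≤ t then (1:ℝ) else 0) * K t * g₂ t))
      ((volume.restrict (Icc c d)).prod (volume.restrict S)) := by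
    apply intProd_aux hTm hSm hTfin hSfin (C := (CK * M₁) * ((CK * M₂) * (volume S).toReal))
    · have mΦ : Measurable (fun q : (ℝ × ℝ) × ℝ =>
          ((if q.1.1 ≤ q.1.2 then (1:ℝ) else 0) * K q.1.2 * g₁ q.1.2)
            * ((if q.1.1 ≤ q.2 then (1:ℝ) else 0) * K q.2 * g₂ q.2)) :=
        (mF₁.comp measurable_fst).mul
          (mF₂.comp ((measurable_fst.fst).prodMk measurable_snd))
      exact (mΦ.stronglyMeasurable.integral_prod_right').aestronglyMeasurable
    · intro p hp1 hp2
      have hb : ∀ᵐ t ∂(volume.restrict S),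
          ‖((if p.1 ≤ p.2 then (1:ℝ) else 0) * K p.2 * g₁ p.2)
            * ((if p.1 ≤ t then (1:ℝ) else 0) * K t * g₂ t)‖ ≤ (CK * M₁) * (CK * M₂) := by
        filter_upwards [ae_restrict_mem hSm] with t ht
        rw [Real.norm_eq_abs, abs_mul]
        exact mul_le_mul (hF₁b p.1 p.2 hp2) (hF₂b p.1 t ht) (abs_nonneg _) (by positivity)
      have h2 := norm_integral_le_of_norm_le_const hb
      rw [measureReal_restrict_apply_univ, measureReal_def] at h2
      simpa [Function.uncurry, Real.norm_eq_abs, mul_assoc] using h2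
  have hInt2 : ∀ s : ℝ, Integrable (Function.uncurry fun u t =>
      ((if u ≤ s then (1:ℝ) else 0) * K s * g₁ s)
        * ((if u ≤ t then (1:ℝ) else 0) * K t * g₂ t))
      ((volume.restrict (Icc c d)).prod (volume.restrict S)) := by
    intro s
    apply intProd_aux hTm hSm hTfin hSfin (C := |K s * g₁ s| * (CK * M₂))
    · have m1 : Measurable (fun p : ℝ × ℝ => (if p.1 ≤ s then (1:ℝ) else 0) * K s * g₁ s) :=
        ((Measurable.ite (measurableSet_le measurable_fst measurable_const) measurable_const
          measurable_const).mul measurable_const).mul measurable_const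
      exact (m1.mul mF₂).aestronglyMeasurable
    · intro p hp1 hp2
      simp only [Function.uncurry]
      rw [abs_mul]
      exact mul_le_mul (hF₁b' p.1 s) (hF₂b p.1 p.2 hp2) (abs_nonneg _) (abs_nonneg _)
  -- bound on |min s t| when K t ≠ 0
  have hminb : ∀ s t : ℝ, K t ≠ 0 → |min s t| ≤ |s| + 1 := by
    intro s t hKt
    have ht : t ∈ Icc (-1:ℝ) 1 := by by_contra hc; exact hKt (hKsupp t hc)
    have h2 : |t| ≤ 1 := abs_le.mpr ⟨ht.1, ht.2⟩
    rcases le_total s t with hst | hst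
    · rw [min_eq_left hst]; linarith [abs_nonneg s]
    · rw [min_eq_right hst]; linarith [abs_nonneg s]
  have hAb : ∀ s t : ℝ, t ∈ S →
      |K s * K t * g₁ s * g₂ t * min s t| ≤ (CK * CK * M₂) * (|g₁ s| * (|s| + 1)) := by
    intro s t ht
    by_cases hKt : K t = 0
    · rw [hKt]
      have : |K s * 0 * g₁ s * g₂ t * min s t| = 0 := by simp
      rw [this]; positivity
    · have h1 := hminb s t hKt
      calc |K s * K t * g₁ s * g₂ t * min s t|
          = |K s| * |K t| * |g₁ s| * |g₂ t| * |min s t| := by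
            rw [abs_mul, abs_mul, abs_mul, abs_mul]
        _ ≤ CK * CK * |g₁ s| * M₂ * (|s| + 1) := by
            gcongr
            · exact hCK s
            · exact hCK t
            · exact hM₂ t ht
        _ = (CK * CK * M₂) * (|g₁ s| * (|s| + 1)) := by ring
  set R := |a| ⊔ |b| with hRdef
  have hR : ∀ s ∈ S, |s| ≤ R := by
    intro s hs
    rw [hS'] at hs
    exact abs_le_max_abs_abs hs.1 hs.2
  -- integrabilities for the final algebraic step
  have mA : Measurable (fun p : ℝ × ℝ => K p.1 * K p.2 * g₁ p.1 * g₂ p.2 * min p.1 p.2) :=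
    ((((hKm.comp measurable_fst).mul (hKm.comp measurable_snd)).mul
      (hg₁m.comp measurable_fst)).mul (hg₂m.comp measurable_snd)).mul
      (measurable_fst.min measurable_snd)
  have intA : ∀ s : ℝ, IntegrableOn (fun t => K s * K t * g₁ s * g₂ t * min s t) S := by
    intro s
    refine intOn_aux hSm hSfin ?_ (C := (CK * CK * M₂) * (|g₁ s| * (|s| + 1))) ?_
    · exact (((((hKm.comp measurable_const).mul hKm).mul
        (hg₁m.comp measurable_const)).mul hg₂m).mul
        (measurable_const.min measurable_id)).aestronglyMeasurable
    · exact fun t ht => hAb s t ht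
  have intB : ∀ s : ℝ, IntegrableOn (fun t => c * ((K s * g₁ s) * (K t * g₂ t))) S := by
    intro s
    refine intOn_aux hSm hSfin ?_ (C := |c| * (|K s * g₁ s| * (CK * M₂))) ?_
    · exact (measurable_const.mul (measurable_const.mul (hKm.mul hg₂m))).aestronglyMeasurable
    · intro t ht
      rw [abs_mul, abs_mul]
      gcongr
      rw [abs_mul]
      gcongr
      · exact hCK t
      · exact hM₂ t ht
  have intAA : IntegrableOn (fun s => ∫ t in S, K s * K t * g₁ s * g₂ t * min s t) S := by
    refine intOn_aux hSm hSfin ?_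
      (C := ((CK * CK * M₂) * (M₁ * (R + 1))) * (volume S).toReal) ?_
    · exact (mA.stronglyMeasurable.integral_prod_right').aestronglyMeasurable
    · intro s hs
      have hb : ∀ᵐ t ∂(volume.restrict S),
          ‖K s * K t * g₁ s * g₂ t * min s t‖ ≤ (CK * CK * M₂) * (M₁ * (R + 1)) := by
        filter_upwards [ae_restrict_mem hSm] with t ht
        rw [Real.norm_eq_abs]
        refine (hAb s t ht).trans ?_
        have h3 : (0:ℝ) ≤ R := le_trans (abs_nonneg a) (le_max_left _ _)
        gcongr
        · exact hM₁ s hs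
        · exact hR s hs
      have h2 := norm_integral_le_of_norm_le_const hb
      rw [measureReal_restrict_apply_univ, measureReal_def] at h2
      simpa [Real.norm_eq_abs] using h2
  have intBB : IntegrableOn (fun s =>
      (c * (K s * g₁ s)) * (∫ t in S, K t * g₂ t)) S := by
    refine intOn_aux hSm hSfin ?_
      (C := (|c| * (CK * M₁)) * |∫ t in S, K t * g₂ t|) ?_
    · exact ((measurable_const.mul (hKm.mul hg₁m)).mul measurable_const).aestronglyMeasurable
    · intro s hs
      rw [abs_mul, abs_mul]
      gcongr
      rw [abs_mul]
      gcongr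
      · exact hCK s
      · exact hM₁ s hs
  -- main computation
  calc (∫ u in S ∩ Icc (-1 : ℝ) 1, H g₁ u * H g₂ u)
      = ∫ u in Icc c d, ∫ s in S, ∫ t in S,
          ((if u ≤ s then (1:ℝ) else 0) * K s * g₁ s)
            * ((if u ≤ t then (1:ℝ) else 0) * K t * g₂ t) := by
        rw [hT]
        exact integral_congr_ae (Filter.Eventually.of_forall key1)
    _ = ∫ s in S, ∫ u in Icc c d, ∫ t in S,
          ((if u ≤ s then (1:ℝ) else 0) * K s * g₁ s)
            * ((if u ≤ t then (1:ℝ) else 0) * K t * g₂ t) :=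
        integral_integral_swap hInt1
    _ = ∫ s in S, ∫ t in S, ∫ u in Icc c d,
          ((if u ≤ s then (1:ℝ) else 0) * K s * g₁ s)
            * ((if u ≤ t then (1:ℝ) else 0) * K t * g₂ t) :=
        integral_congr_ae (Filter.Eventually.of_forall fun s => integral_integral_swap (hInt2 s))
    _ = ∫ s in S, ∫ t in S, (K s * K t * g₁ s * g₂ t * min s t
          - c * ((K s * g₁ s) * (K t * g₂ t))) := by
        refine integral_congr_ae ?_
        filter_upwards [ae_restrict_mem hSm] with s hs
        refine integral_congr_ae ?_
        filter_upwards [ae_restrict_mem hSm] with t ht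
        have hmerge : ∀ u : ℝ, ((if u ≤ s then (1:ℝ) else 0) * K s * g₁ s)
            * ((if u ≤ t then (1:ℝ) else 0) * K t * g₂ t)
            = (if u ≤ min s t then (1:ℝ) else 0) * (K s * g₁ s * (K t * g₂ t)) := by
          intro u
          by_cases h1 : u ≤ s <;> by_cases h2 : u ≤ t <;>
            simp [h1, h2, le_min_iff] <;> ring
        simp_rw [hmerge]
        rw [integral_mul_const]
        by_cases hKs : K s = 0
        · simp [hKs]
        by_cases hKt : K t = 0
        · simp [hKt]
        have hs1 : s ∈ Icc (-1:ℝ) 1 := by by_contra hc; exact hKs (hKsupp s hc)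
        have ht1 : t ∈ Icc (-1:ℝ) 1 := by by_contra hc; exact hKt (hKsupp t hc)
        have hs2 : s ∈ Icc a b := hS' ▸ hs
        have ht2 : t ∈ Icc a b := hS' ▸ ht
        have hcm : c ≤ min s t :=
          le_min (max_le hs2.1 hs1.1) (max_le ht2.1 ht1.1)
        have hmd : min s t ≤ d :=
          (min_le_left s t).trans (le_min hs2.2 hs1.2)
        rw [ind_int_aux c d (min s t) hcm hmd]
        ring
    _ = ∫ s in S, ((∫ t in S, K s * K t * g₁ s * g₂ t * min s t)
          - (c * (K s * g₁ s)) * (∫ t in S, K t * g₂ t)) := by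
        refine integral_congr_ae (Filter.Eventually.of_forall fun s => ?_)
        dsimp only
        rw [integral_sub (intA s) (intB s)]
        congr 1
        have : ∀ t : ℝ, c * ((K s * g₁ s) * (K t * g₂ t))
            = (c * (K s * g₁ s)) * (K t * g₂ t) := fun t => by ring
        simp_rw [this]
        exact integral_const_mul _ _
    _ = (∫ s in S, ∫ t in S, K s * K t * g₁ s * g₂ t * min s t)
          - ∫ s in S, (c * (K s * g₁ s)) * (∫ t in S, K t * g₂ t) :=
        integral_sub intAA intBB
    _ = ∫ u in S, ∫ v in S, K u * K v * g₁ u * g₂ v * min u v := by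
        have : ∀ s : ℝ, (c * (K s * g₁ s)) * (∫ t in S, K t * g₂ t)
            = (K s * g₁ s) * (c * ∫ t in S, K t * g₂ t) := fun s => by ring
        simp_rw [this]
        rw [integral_mul_const]
        rcases hzero with h0 | h0
        · rw [h0, zero_mul, sub_zero]
        · rw [h0, mul_zero, mul_zero, sub_zero]
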